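/- Every element S of G can be written as S = W ∘ P, where W ∈ G is a unitary operator on the Hilbert space H ⊕ ℂ and P ∈ G is a self-adjoint (indeed positive) operator on H ⊕ ℂ. -/

import Mathlib

open scoped InnerProductSpace ComplexConjugate

noncomputable section

variable {H : Type*} [NormedAddCommGroup H] [InnerProductSpace ℂ H]

/-- The sesquilinear form `𝒜((x,λ),(y,μ)) = ⟨x,y⟩ − λ·conj(μ)` on `H ⊕ ℂ`, where `⟨·,·⟩` is
linear in the first variable and conjugate-linear in the second (so `⟨x,y⟩ = ⟪y,x⟫_ℂ` in
Mathlib's convention). -/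
def formA (v w : WithLp 2 (H × ℂ)) : ℂ :=
  ⟪(WithLp.equiv 2 (H × ℂ) w).1, (WithLp.equiv 2 (H × ℂ) v).1⟫_ℂ
    - (WithLp.equiv 2 (H × ℂ) v).2 * conj (WithLp.equiv 2 (H × ℂ) w).2

/-- Membership in the group `G` of bijective bounded operators on `H ⊕ ℂ` preserving `𝒜`. -/
def memG (S : WithLp 2 (H × ℂ) →L[ℂ] WithLp 2 (H × ℂ)) : Prop :=
  Function.Bijective S ∧ ∀ v w : WithLp 2 (H × ℂ), formA (S v) (S w) = formA v w

def Jop : WithLp 2 (H × ℂ) →L[ℂ] WithLp 2 (H × ℂ) :=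
  (WithLp.prodContinuousLinearEquiv 2 ℂ H ℂ).symm.toContinuousLinearMap ∘L
    ((ContinuousLinearMap.id ℂ H).prodMap (-(ContinuousLinearMap.id ℂ ℂ))) ∘L
      (WithLp.prodContinuousLinearEquiv 2 ℂ H ℂ).toContinuousLinearMap

lemma Jop_fst (v : WithLp 2 (H × ℂ)) : (Jop v).fst = v.fst := rfl
lemma Jop_snd (v : WithLp 2 (H × ℂ)) : (Jop v).snd = -v.snd := rfl

set_option linter.unusedSectionVars false in
lemma ext_EL {v w : WithLp 2 (H × ℂ)} (h1 : v.fst = w.fst) (h2 : v.snd = w.snd) : v = w := by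
  apply (WithLp.equiv 2 (H × ℂ)).injective
  exact Prod.ext h1 h2

lemma Jop_Jop : (Jop : WithLp 2 (H × ℂ) →L[ℂ] _) * Jop = 1 := by
  refine ContinuousLinearMap.ext fun v => ext_EL ?_ ?_
  · rw [ContinuousLinearMap.mul_apply, Jop_fst, Jop_fst]; rfl
  · rw [ContinuousLinearMap.mul_apply, Jop_snd, Jop_snd, neg_neg]; rfl

lemma formA_eq (v w : WithLp 2 (H × ℂ)) : formA v w = ⟪w, Jop v⟫_ℂ := by
  simp [formA, WithLp.prod_inner_apply, Jop_fst, Jop_snd, RCLike.inner_apply, mul_comm]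
  rfl

section complete
variable [CompleteSpace H]

lemma Jop_star : star (Jop : WithLp 2 (H × ℂ) →L[ℂ] _) = Jop := by
  rw [ContinuousLinearMap.star_eq_adjoint]
  symm
  rw [ContinuousLinearMap.eq_adjoint_iff]
  intro x y
  simp [WithLp.prod_inner_apply, Jop_fst, Jop_snd, inner_neg_left, inner_neg_right]

lemma preserve_iff (T : WithLp 2 (H × ℂ) →L[ℂ] WithLp 2 (H × ℂ)) :
    (∀ v w, formA (T v) (T w) = formA v w) ↔ star T * Jop * T = Jop := by
  constructor
  · intro h
    ext v
    apply ext_inner_left ℂ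
    intro w
    have := h v w
    rw [formA_eq, formA_eq] at this
    rw [ContinuousLinearMap.mul_apply, ContinuousLinearMap.mul_apply,
      ContinuousLinearMap.star_eq_adjoint, ContinuousLinearMap.adjoint_inner_right]
    exact this
  · intro h v w
    rw [formA_eq, formA_eq]
    calc ⟪T w, Jop (T v)⟫_ℂ
        = ⟪w, (star T * Jop * T : WithLp 2 (H × ℂ) →L[ℂ] WithLp 2 (H × ℂ)) v⟫_ℂ := by
          rw [ContinuousLinearMap.mul_apply, ContinuousLinearMap.mul_apply,
            ContinuousLinearMap.star_eq_adjoint, ContinuousLinearMap.adjoint_inner_right]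
      _ = ⟪w, Jop v⟫_ℂ := by rw [h]

set_option maxHeartbeats 2000000 in
set_option synthInstance.maxHeartbeats 1000000 in
theorem stmt5' (S : WithLp 2 (H × ℂ) →L[ℂ] WithLp 2 (H × ℂ)) (hS : memG S) :
    ∃ W P : WithLp 2 (H × ℂ) →L[ℂ] WithLp 2 (H × ℂ),
      memG W ∧ W ∈ unitary (WithLp 2 (H × ℂ) →L[ℂ] WithLp 2 (H × ℂ)) ∧
      memG P ∧ IsSelfAdjoint P ∧ P.IsPositive ∧ S = W ∘L P := by
  obtain ⟨hbij, hpres⟩ := hS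
  set J : WithLp 2 (H × ℂ) →L[ℂ] WithLp 2 (H × ℂ) := Jop with hJdef
  have hrel : star S * J * S = J := (preserve_iff S).mp hpres
  have hJJ : J * J = 1 := Jop_Jop
  have hJs : star J = J := Jop_star
  set L : WithLp 2 (H × ℂ) →L[ℂ] WithLp 2 (H × ℂ) := J * star S * J with hLdef
  have hLS : L * S = 1 := by
    calc L * S = J * (star S * J * S) := by simp only [hLdef, mul_assoc]
      _ = 1 := by rw [hrel, hJJ]
  have hSL : S * L = 1 := by
    ext y
    obtain ⟨x, rfl⟩ := hbij.2 y
    have hx : L (S x) = x := by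
      rw [← ContinuousLinearMap.mul_apply, hLS]; rfl
    calc (S * L) (S x) = S (L (S x)) := rfl
      _ = S x := by rw [hx]
      _ = (1 : WithLp 2 (H × ℂ) →L[ℂ] WithLp 2 (H × ℂ)) (S x) := rfl
  have hsLS : star L * star S = 1 := by rw [← star_mul, hSL, star_one]
  have hsSL : star S * star L = 1 := by rw [← star_mul, hLS, star_one]
  set A : WithLp 2 (H × ℂ) →L[ℂ] WithLp 2 (H × ℂ) := star S * S with hAdef
  set B : WithLp 2 (H × ℂ) →L[ℂ] WithLp 2 (H × ℂ) := L * star L with hBdef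
  have hA0 : 0 ≤ A := star_mul_self_nonneg S
  have hAB : A * B = 1 := by
    calc A * B = star S * (S * L) * star L := by simp only [hAdef, hBdef, mul_assoc]
      _ = 1 := by rw [hSL, mul_one, hsSL]
  have hBA : B * A = 1 := by
    calc B * A = L * (star L * star S) * S := by simp only [hAdef, hBdef, mul_assoc]
      _ = 1 := by rw [hsLS, mul_one, hLS]
  have hAu : IsUnit A := ⟨⟨A, B, hAB, hBA⟩, rfl⟩
  have h0 : (0 : NNReal) ∉ spectrum NNReal A := spectrum.zero_notMem NNReal hAu
  set P : WithLp 2 (H × ℂ) →L[ℂ] WithLp 2 (H × ℂ) := CFC.sqrt A with hPdef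
  set R : WithLp 2 (H × ℂ) →L[ℂ] WithLp 2 (H × ℂ) := A ^ (-(1/2) : ℝ) with hRdef
  have hP0 : 0 ≤ P := CFC.sqrt_nonneg A
  have hR0 : 0 ≤ R := CFC.rpow_nonneg
  have hPsa : IsSelfAdjoint P := .of_nonneg hP0
  have hRsa : IsSelfAdjoint R := .of_nonneg hR0
  have hPsq : P * P = A := CFC.sqrt_mul_sqrt_self A hA0
  have hPR : P * R = 1 := by
    rw [hPdef, CFC.sqrt_eq_rpow, hRdef]
    exact CFC.rpow_mul_rpow_neg (1/2) (by unfold IsStrictlyPositive; exact ⟨hA0, hAu⟩)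
  have hRP : R * P = 1 := by
    rw [hPdef, CFC.sqrt_eq_rpow, hRdef]
    exact CFC.rpow_neg_mul_rpow (1/2) (by unfold IsStrictlyPositive; exact ⟨hA0, hAu⟩)
  have hRR : R * R = B := by
    have h2 : R * R = A ^ (-1 : ℝ) := by
      rw [hRdef, ← CFC.rpow_add hAu]
      norm_num
    have h3 := CFC.rpow_intCast (⟨A, B, hAB, hBA⟩ : (WithLp 2 (H × ℂ) →L[ℂ] WithLp 2 (H × ℂ))ˣ)
      (-1) hA0
    simp only [Int.cast_neg, Int.cast_one, zpow_neg, zpow_one] at h3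
    rw [h2, h3]
    rfl
  -- key commutation identities
  have hrel' : star S * (J * S) = J := by rw [← mul_assoc]; exact hrel
  have hLJ : L * J = J * star S := by
    calc L * J = J * star S * (J * J) := by simp only [hLdef, mul_assoc]
      _ = J * star S := by rw [hJJ, mul_one]
  have hSJ : S * J = J * star L := by
    have h := congrArg star hLJ
    simp only [star_mul, hJs, star_star] at h
    exact h.symm
  have hJAJ : J * A * J = B := by
    calc J * A * J = (J * star S) * (S * J) := by simp only [hAdef, mul_assoc]
      _ = (L * J) * (J * star L) := by rw [hLJ, hSJ]
      _ = L * (J * J) * star L := by simp only [mul_assoc]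
      _ = B := by rw [hJJ, mul_one, hBdef]
  have hJPJsq : (J * P * J) * (J * P * J) = B := by
    calc (J * P * J) * (J * P * J) = J * (P * (J * J) * P) * J := by simp only [mul_assoc]
      _ = J * (P * P) * J := by rw [hJJ, mul_one]
      _ = B := by rw [hPsq, hJAJ]
  have hJPJ0 : 0 ≤ J * P * J := by
    have := star_left_conjugate_nonneg hP0 J
    rwa [hJs] at this
  have hJPJ : J * P * J = R :=
    (CFC.sqrt_unique hJPJsq hJPJ0).symm.trans (CFC.sqrt_unique hRR hR0)
  have hPJ : P * J = J * R := by
    calc P * J = (J * J) * (P * J) := by rw [hJJ, one_mul]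
      _ = J * (J * P * J) := by simp only [mul_assoc]
      _ = J * R := by rw [hJPJ]
  have hJP : J * P = R * J := by
    have h := congrArg star hPJ
    simp only [star_mul, hJs, hPsa.star_eq, hRsa.star_eq] at h
    exact h
  have hPJP : P * J * P = J := by
    rw [hPJ, mul_assoc, hRP, mul_one]
  have hRJR : R * J * R = J := by
    rw [← hJP, mul_assoc, hPR, mul_one]
  -- properties of P
  have hPbij : Function.Bijective P := by
    rw [Function.bijective_iff_has_inverse]
    refine ⟨R, fun x => ?_, fun x => ?_⟩
    · rw [← ContinuousLinearMap.mul_apply, hRP]; rfl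
    · rw [← ContinuousLinearMap.mul_apply, hPR]; rfl
  have hPmem : memG P := by
    refine ⟨hPbij, (preserve_iff P).mpr ?_⟩
    rw [hPsa.star_eq]
    exact hPJP
  -- W
  set W : WithLp 2 (H × ℂ) →L[ℂ] WithLp 2 (H × ℂ) := S * R with hWdef
  have hWs : star W = R * star S := by rw [hWdef, star_mul, hRsa.star_eq]
  have hWW : star W * W = 1 := by
    calc star W * W = R * (star S * S) * R := by simp only [hWs, hWdef, mul_assoc, star_mul, hRsa.star_eq]
      _ = R * (P * P) * R := by rw [← hAdef, ← hPsq]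
      _ = (R * P) * (P * R) := by simp only [mul_assoc]
      _ = 1 := by rw [hRP, hPR, mul_one]
  have hWW' : W * star W = 1 := by
    calc W * star W = S * (R * R) * star S := by simp only [hWs, hWdef, mul_assoc, star_mul, hRsa.star_eq]
      _ = S * (L * star L) * star S := by rw [hRR, hBdef]
      _ = (S * L) * (star L * star S) := by simp only [mul_assoc]
      _ = 1 := by rw [hSL, hsLS, mul_one]
  have hWform : star W * J * W = J := by
    calc star W * J * W = R * (star S * J * S) * R := by simp only [hWs, hWdef, mul_assoc, star_mul, hRsa.star_eq]
      _ = R * J * R := by rw [hrel]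
      _ = J := hRJR
  have hWbij : Function.Bijective W := by
    rw [Function.bijective_iff_has_inverse]
    have h1 : (P * L) * W = 1 := by
      calc (P * L) * W = P * (L * S) * R := by simp only [hWdef, mul_assoc]
        _ = 1 := by rw [hLS, mul_one, hPR]
    have h2 : W * (P * L) = 1 := by
      calc W * (P * L) = S * (R * P) * L := by simp only [hWdef, mul_assoc]
        _ = 1 := by rw [hRP, mul_one, hSL]
    refine ⟨P * L, fun x => ?_, fun x => ?_⟩
    · rw [← ContinuousLinearMap.mul_apply, h1]; rfl
    · rw [← ContinuousLinearMap.mul_apply, h2]; rfl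
  have hWmem : memG W := ⟨hWbij, (preserve_iff W).mpr hWform⟩
  have hWP : W * P = S := by
    rw [hWdef, mul_assoc, hRP, mul_one]
  exact ⟨W, P, hWmem, Unitary.mem_iff.mpr ⟨hWW, hWW'⟩, hPmem, hPsa,
    (ContinuousLinearMap.nonneg_iff_isPositive P).mp hP0,
    by rw [← ContinuousLinearMap.mul_def, hWP]⟩

end complete

/-- Every element `S` of `G` is a composition `S = W ∘ P` with `W ∈ G` unitary on the Hilbert
space `H ⊕ ℂ` and `P ∈ G` self-adjoint (indeed positive) on `H ⊕ ℂ`. -/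
theorem stmt5 [CompleteSpace H]
    (S : WithLp 2 (H × ℂ) →L[ℂ] WithLp 2 (H × ℂ)) (hS : memG S) :
    ∃ W P : WithLp 2 (H × ℂ) →L[ℂ] WithLp 2 (H × ℂ),
      memG W ∧ W ∈ unitary (WithLp 2 (H × ℂ) →L[ℂ] WithLp 2 (H × ℂ)) ∧
      memG P ∧ IsSelfAdjoint P ∧ P.IsPositive ∧ S = W ∘L P := by
  exact stmt5' S hS

end
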